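/- For any $(t:n)$ with $t, n$ algebraic integers of a totally real field $F$ of degree $d_F$, $n \neq 0$, $t^2 - 4n \neq 0$, and any nonzero ideal $\mathfrak{a} \subseteq \mathcal{O}_F$ such that $t^2 - 4n \in \mathfrak{a}$, the vector $\xi = (t^{(v)}/\sqrt{|n|_v})_{v \in \Sigma_\infty} \in \mathbb{R}^{d_F}$ satisfies $\|\xi\|^2 \geq d_F^{1/2}\big(\mathrm{Nr}(n^{-1}\mathfrak{a})^{1/d_F} - 4\big)$, where $\|\cdot\|$ is the Euclidean norm. -/

import Mathlib

open NumberField Finset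

private lemma prod_abs_eq_abs_norm' (F : Type*) [Field F] [NumberField F] (x : F) :
    ∏ φ : F →+* ℂ, ‖φ x‖ = |(Algebra.norm ℚ x : ℝ)| := by
  have h := congr_arg (‖·‖) (Algebra.norm_eq_prod_embeddings ℚ ℂ x)
  simp only [norm_prod] at h
  rw [Fintype.prod_equiv (RingHom.equivRatAlgHom F ℂ) (fun φ : F →+* ℂ => ‖φ x‖)
      (fun σ : F →ₐ[ℚ] ℂ => ‖σ x‖) (fun φ => by simp [RingHom.equivRatAlgHom_apply]),
      ← h, eq_ratCast]
  simp [← Complex.norm_real]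

/-- Let `F` be a totally real number field of degree `d`, `t, n` algebraic
integers with `n ≠ 0`, `t² - 4n ≠ 0`, and `𝔞` a nonzero ideal containing `t² - 4n`.  Then the
vector `ξ = (t^{(v)}/√|n|_v)_v ∈ ℝ^d` satisfies
`‖ξ‖² ≥ √d (Nr(n⁻¹𝔞)^{1/d} - 4)`. -/
theorem stmt_6 (F : Type*) [Field F] [NumberField F]
    (htr : ∀ (φ : F →+* ℂ) (x : F), (φ x).im = 0)
    (t n : 𝓞 F) (hn : n ≠ 0) (hΔ : t ^ 2 - 4 * n ≠ 0)
    (𝔞 : Ideal (𝓞 F)) (h𝔞 : 𝔞 ≠ 0) (hmem : t ^ 2 - 4 * n ∈ 𝔞) :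
    Real.sqrt (Module.finrank ℚ F) *
        (((Ideal.absNorm 𝔞 : ℝ) / |((Algebra.norm ℤ n : ℤ) : ℝ)|) ^
            ((Module.finrank ℚ F : ℝ))⁻¹ - 4) ≤
      ∑ φ : F →+* ℂ,
        (φ (algebraMap (𝓞 F) F t)).re ^ 2 / |(φ (algebraMap (𝓞 F) F n)).re| := by
  classical
  set d := Module.finrank ℚ F with hd
  have hd0 : 0 < d := Module.finrank_pos
  have hcard : Fintype.card (F →+* ℂ) = d := NumberField.Embeddings.card F ℂ
  -- real-valuedness
  have hre : ∀ (φ : F →+* ℂ) (x : F), φ x = ((φ x).re : ℂ) := fun φ x =>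
    Complex.ext rfl (by simp [htr])
  set T : (F →+* ℂ) → ℝ := fun φ => (φ (algebraMap (𝓞 F) F t)).re with hT
  set N : (F →+* ℂ) → ℝ := fun φ => (φ (algebraMap (𝓞 F) F n)).re with hN
  set S : ℝ := ∑ φ : F →+* ℂ, T φ ^ 2 / |N φ| with hS
  have hNne : ∀ φ : F →+* ℂ, N φ ≠ 0 := by
    intro φ h0
    apply hn
    have h0' : (φ (algebraMap (𝓞 F) F n)).re = 0 := h0
    have : φ (algebraMap (𝓞 F) F n) = 0 := by
      rw [hre φ, h0']; simp
    have := (map_eq_zero φ).mp this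
    exact_mod_cast (map_eq_zero_iff _ (RingOfIntegers.coe_injective (K := F))).mp this
  -- product formula for integers
  have prodNm : ∀ x : 𝓞 F, ∏ φ : F →+* ℂ, |(φ (algebraMap (𝓞 F) F x)).re|
      = |((Algebra.norm ℤ x : ℤ) : ℝ)| := by
    intro x
    have h1 := prod_abs_eq_abs_norm' F (algebraMap (𝓞 F) F x)
    have h2 : ∀ φ : F →+* ℂ, ‖φ (algebraMap (𝓞 F) F x)‖
        = |(φ (algebraMap (𝓞 F) F x)).re| := by
      intro φ
      conv_lhs => rw [hre φ]
      exact Complex.norm_real _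
    rw [Fintype.prod_congr _ _ h2] at h1
    rw [h1]
    have := Algebra.coe_norm_int x
    rw [← this]
    norm_cast
  -- Δ values
  have hΔre : ∀ φ : F →+* ℂ, (φ (algebraMap (𝓞 F) F (t ^ 2 - 4 * n))).re
      = T φ ^ 2 - 4 * N φ := by
    intro φ
    have e2 : φ (algebraMap (𝓞 F) F (t ^ 2 - 4 * n))
        = ((T φ ^ 2 - 4 * N φ : ℝ) : ℂ) := by
      rw [map_sub, map_pow, map_mul, map_ofNat, map_sub, map_pow, map_mul, map_ofNat,
        hre φ (algebraMap (𝓞 F) F t), hre φ (algebraMap (𝓞 F) F n)]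
      push_cast
      ring
    rw [e2, Complex.ofReal_re]
  set A : (F →+* ℂ) → ℝ := fun φ => |T φ ^ 2 - 4 * N φ| / |N φ| with hA
  have hAnn : ∀ φ, 0 ≤ A φ := fun φ => div_nonneg (abs_nonneg _) (abs_nonneg _)
  have hNmn_pos : (0:ℝ) < |((Algebra.norm ℤ n : ℤ) : ℝ)| := by
    rw [← prodNm n]
    exact Finset.prod_pos fun φ _ => abs_pos.mpr (hNne φ)
  -- product of A
  have hprodA : ∏ φ : F →+* ℂ, A φ
      = |((Algebra.norm ℤ (t ^ 2 - 4 * n) : ℤ) : ℝ)| / |((Algebra.norm ℤ n : ℤ) : ℝ)| := by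
    rw [hA, Finset.prod_div_distrib, prodNm n, ← prodNm (t ^ 2 - 4 * n)]
    congr 1
    exact Fintype.prod_congr _ _ fun φ => by rw [← hΔre φ]
  -- absNorm ≤ |Nm Δ|
  have hdvd := Ideal.absNorm_dvd_norm_of_mem hmem
  have hNmΔ_pos : (0:ℝ) < |((Algebra.norm ℤ (t ^ 2 - 4 * n) : ℤ) : ℝ)| := by
    rw [← prodNm (t ^ 2 - 4 * n)]
    refine Finset.prod_pos fun φ _ => abs_pos.mpr ?_
    rw [hΔre φ]
    intro h0
    apply hΔ
    have : φ (algebraMap (𝓞 F) F (t ^ 2 - 4 * n)) = 0 := by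
      rw [hre φ, hΔre φ, h0]; simp
    have := (map_eq_zero φ).mp this
    exact_mod_cast (map_eq_zero_iff _ (RingOfIntegers.coe_injective (K := F))).mp this
  have habs : (Ideal.absNorm 𝔞 : ℝ) ≤ |((Algebra.norm ℤ (t ^ 2 - 4 * n) : ℤ) : ℝ)| := by
    have hz : Algebra.norm ℤ (t ^ 2 - 4 * n) ≠ 0 := by
      intro h0
      rw [h0] at hNmΔ_pos
      simp at hNmΔ_pos
    have h1 : (Ideal.absNorm 𝔞 : ℤ) ≤ |Algebra.norm ℤ (t ^ 2 - 4 * n)| :=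
      Int.le_of_dvd (abs_pos.mpr hz) ((dvd_abs _ _).mpr hdvd)
    calc (Ideal.absNorm 𝔞 : ℝ) ≤ (|Algebra.norm ℤ (t ^ 2 - 4 * n)| : ℤ) := by exact_mod_cast h1
      _ = _ := by push_cast; ring
  set X : ℝ := (Ideal.absNorm 𝔞 : ℝ) / |((Algebra.norm ℤ n : ℤ) : ℝ)| with hX
  have hXnn : 0 ≤ X := div_nonneg (Nat.cast_nonneg _) (abs_nonneg _)
  have hXle : X ≤ ∏ φ : F →+* ℂ, A φ := by
    rw [hprodA, hX]
    gcongr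
  -- AM-GM
  have hAMGM : (∏ φ : F →+* ℂ, A φ) ^ ((d:ℝ))⁻¹ ≤ (d:ℝ)⁻¹ * ∑ φ : F →+* ℂ, A φ := by
    have h := Real.geom_mean_le_arith_mean_weighted Finset.univ
      (fun _ : F →+* ℂ => ((d:ℝ))⁻¹) A (fun i _ => by positivity)
      (by simp [hcard, Finset.card_univ]; field_simp) (fun i _ => hAnn i)
    rw [Real.finset_prod_rpow _ _ (fun i _ => hAnn i)] at h
    simpa [Finset.mul_sum] using h
  have hXd : X ^ ((d:ℝ))⁻¹ ≤ (d:ℝ)⁻¹ * ∑ φ : F →+* ℂ, A φ :=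
    le_trans (Real.rpow_le_rpow hXnn hXle (by positivity)) hAMGM
  -- triangle inequality
  have hAle : ∀ φ : F →+* ℂ, A φ ≤ T φ ^ 2 / |N φ| + 4 := by
    intro φ
    have h1 : |T φ ^ 2 - 4 * N φ| ≤ T φ ^ 2 + 4 * |N φ| := by
      calc |T φ ^ 2 - 4 * N φ| ≤ |T φ ^ 2| + |4 * N φ| := abs_sub _ _
        _ = T φ ^ 2 + 4 * |N φ| := by rw [abs_of_nonneg (sq_nonneg _), abs_mul]; norm_num
    have h2 : (0:ℝ) < |N φ| := abs_pos.mpr (hNne φ)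
    show |T φ ^ 2 - 4 * N φ| / |N φ| ≤ T φ ^ 2 / |N φ| + 4
    rw [div_le_iff₀ h2]
    have e3 : (T φ ^ 2 / |N φ| + 4) * |N φ| = T φ ^ 2 + 4 * |N φ| := by
      field_simp
    rw [e3]
    exact h1
  have hsumA : ∑ φ : F →+* ℂ, A φ ≤ S + 4 * d := by
    calc ∑ φ : F →+* ℂ, A φ ≤ ∑ φ : F →+* ℂ, (T φ ^ 2 / |N φ| + 4) :=
        Finset.sum_le_sum fun i _ => hAle i
      _ = S + 4 * d := by rw [Finset.sum_add_distrib, ← hS]; simp [hcard, Finset.card_univ]; ring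
  have hkey : X ^ ((d:ℝ))⁻¹ - 4 ≤ S / d := by
    have h1 : X ^ ((d:ℝ))⁻¹ ≤ (d:ℝ)⁻¹ * (S + 4 * d) :=
      hXd.trans (by
        apply mul_le_mul_of_nonneg_left hsumA
        positivity)
    have hd' : (0:ℝ) < d := by exact_mod_cast hd0
    rw [mul_add] at h1
    have : (d:ℝ)⁻¹ * (4 * d) = 4 := by field_simp
    rw [this] at h1
    linarith [h1, (by rw [inv_mul_eq_div] : (d:ℝ)⁻¹ * S = S / d)]
  have hSnn : 0 ≤ S := Finset.sum_nonneg fun i _ => div_nonneg (sq_nonneg _) (abs_nonneg _)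
  show Real.sqrt d * (X ^ ((d:ℝ))⁻¹ - 4) ≤ S
  rcases le_or_gt (X ^ ((d:ℝ))⁻¹) 4 with hc | hc
  · exact le_trans (mul_nonpos_of_nonneg_of_nonpos (Real.sqrt_nonneg _) (by linarith)) hSnn
  · have hd' : (1:ℝ) ≤ d := by exact_mod_cast hd0
    have hsqrt : Real.sqrt d ≤ d := by
      nlinarith [Real.sq_sqrt (by linarith : (0:ℝ) ≤ d), Real.sqrt_nonneg (d:ℝ),
        Real.one_le_sqrt.mpr hd']
    calc Real.sqrt d * (X ^ ((d:ℝ))⁻¹ - 4) ≤ (d:ℝ) * (X ^ ((d:ℝ))⁻¹ - 4) :=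
        mul_le_mul_of_nonneg_right hsqrt (by linarith)
      _ ≤ (d:ℝ) * (S / d) := mul_le_mul_of_nonneg_left hkey (by positivity)
      _ = S := by field_simp
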